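/- Let 𝔄₁, 𝔄₂ be hyperassignments with 𝔄₁ ⊑ 𝔄₂, χ a quantifier prefix, and α ∈ {EA, AE}. Then evl^α(𝔄₁,χ) ⊑ evl^α(𝔄₂,χ); that is, the evolution operator is monotone with respect to the preorder ⊑. (Proposition 4, monotonicity of evolution.) -/

import Mathlib

namespace GFG

/-- Temporal valuations. -/
abbrev Val : Type := ℕ → Bool

/-- Assignments over a type `AP` of atomic propositions. -/
abbrev Asg (AP : Type*) : Type _ := AP → Val

section Hyper

variable {X : Type*}

/-- A hyperassignment: a nonempty set of subsets not containing `∅`. -/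
def IsHyp (𝔄 : Set (Set X)) : Prop := 𝔄 ≠ ∅ ∧ ∅ ∉ 𝔄

/-- A choice function for `𝔄`. -/
def IsChoice (𝔄 : Set (Set X)) (ϑ : Set X → X) : Prop := ∀ W ∈ 𝔄, ϑ W ∈ W

/-- The dual hyperassignment. -/
def hdual (𝔄 : Set (Set X)) : Set (Set X) :=
  { Y | ∃ ϑ : Set X → X, IsChoice 𝔄 ϑ ∧ Y = ϑ '' 𝔄 }

/-- The preorder `⊑` on hyperassignments. -/
def hle (𝔄₁ 𝔄₂ : Set (Set X)) : Prop := ∀ W₁ ∈ 𝔄₁, ∃ W₂ ∈ 𝔄₂, W₂ ⊆ W₁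

/-- The equivalence `≡` on hyperassignments. -/
def heqv (𝔄₁ 𝔄₂ : Set (Set X)) : Prop := hle 𝔄₁ 𝔄₂ ∧ hle 𝔄₂ 𝔄₁

/-- `par 𝔄`: partitions of `𝔄` into two disjoint parts. -/
def par (𝔄 : Set (Set X)) : Set (Set (Set X) × Set (Set X)) :=
  { pr | pr.1 ∪ pr.2 = 𝔄 ∧ Disjoint pr.1 pr.2 }

end Hyper

variable {AP : Type*}

/-- `a₁ ≈_p^{>k} a₂`. -/
def ApproxGT (p : AP) (k : ℕ) (a₁ a₂ : Asg AP) : Prop :=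
  (∀ q, q ≠ p → a₁ q = a₂ q) ∧ ∀ t ≤ k, a₁ p t = a₂ p t

/-- `a₁ ≈_p^{≥k} a₂`. -/
def ApproxGE (p : AP) (k : ℕ) (a₁ a₂ : Asg AP) : Prop :=
  (∀ q, q ≠ p → a₁ q = a₂ q) ∧ ∀ t < k, a₁ p t = a₂ p t

/-- Quantifier specifications `ς = (B,S)`. -/
abbrev Spec (AP : Type*) := Set AP × Set AP

/-- A `ς`-functor. -/
def IsSpecFunctor (ς : Spec AP) (F : Asg AP → Val) : Prop :=
  (∀ (k : ℕ) (a₁ a₂ : Asg AP), (∃ p ∈ ς.1, ApproxGT p k a₁ a₂) → F a₁ k = F a₂ k) ∧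
  (∀ (k : ℕ) (a₁ a₂ : Asg AP), (∃ p ∈ ς.2, ApproxGE p k a₁ a₂) → F a₁ k = F a₂ k)

variable [DecidableEq AP]

/-- `ext(a,F,p)`. -/
def extAsg (a : Asg AP) (F : Asg AP → Val) (p : AP) : Asg AP :=
  Function.update a p (F a)

/-- `ext(W,F,p)`. -/
def extSet (W : Set (Asg AP)) (F : Asg AP → Val) (p : AP) : Set (Asg AP) :=
  (fun a => extAsg a F p) '' W

/-- `ext_ς(𝔄,p)`. -/
def extSpec (ς : Spec AP) (𝔄 : Set (Set (Asg AP))) (p : AP) : Set (Set (Asg AP)) :=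
  { Y | ∃ W ∈ 𝔄, ∃ F : Asg AP → Val, IsSpecFunctor ς F ∧ Y = extSet W F p }

/-- Alternation flags. -/
inductive Flag : Type
  | EA : Flag
  | AE : Flag
  deriving DecidableEq

/-- The dual flag. -/
def Flag.dual : Flag → Flag
  | .EA => .AE
  | .AE => .EA

/-- GFG-QPTL formulas (LTL formulas abstracted as arbitrary sets of assignments). -/
inductive Formula (AP : Type*) : Type _ where
  | atom : Set (Asg AP) → Formula AP
  | neg : Formula AP → Formula AP
  | conj : Formula AP → Formula AP → Formula AP
  | disj : Formula AP → Formula AP → Formula AP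
  | ex : AP → Spec AP → Formula AP → Formula AP
  | all : AP → Spec AP → Formula AP → Formula AP

/-- The alternating Hodges semantics `𝔄 ⊨^α φ`. -/
def Sat : Formula AP → Flag → Set (Set (Asg AP)) → Prop
  | .atom Ψ, .EA, 𝔄 => ∃ W ∈ 𝔄, W ⊆ Ψ
  | .atom Ψ, .AE, 𝔄 => ∀ W ∈ 𝔄, W ∩ Ψ ≠ ∅
  | .neg φ, α, 𝔄 => ¬ Sat φ α.dual 𝔄
  | .conj φ₁ φ₂, .EA, 𝔄 =>
      ∀ pr ∈ par 𝔄, (pr.1 ≠ ∅ ∧ Sat φ₁ .EA pr.1) ∨ (pr.2 ≠ ∅ ∧ Sat φ₂ .EA pr.2)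
  | .conj φ₁ φ₂, .AE, 𝔄 =>
      ∀ pr ∈ par (hdual 𝔄), (pr.1 ≠ ∅ ∧ Sat φ₁ .EA pr.1) ∨ (pr.2 ≠ ∅ ∧ Sat φ₂ .EA pr.2)
  | .disj φ₁ φ₂, .AE, 𝔄 =>
      ∃ pr ∈ par 𝔄, (pr.1 ≠ ∅ → Sat φ₁ .AE pr.1) ∧ (pr.2 ≠ ∅ → Sat φ₂ .AE pr.2)
  | .disj φ₁ φ₂, .EA, 𝔄 =>
      ∃ pr ∈ par (hdual 𝔄), (pr.1 ≠ ∅ → Sat φ₁ .AE pr.1) ∧ (pr.2 ≠ ∅ → Sat φ₂ .AE pr.2)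
  | .ex p ς φ, .EA, 𝔄 => Sat φ .EA (extSpec ς 𝔄 p)
  | .ex p ς φ, .AE, 𝔄 => Sat φ .EA (extSpec ς (hdual 𝔄) p)
  | .all p ς φ, .AE, 𝔄 => Sat φ .AE (extSpec ς 𝔄 p)
  | .all p ς φ, .EA, 𝔄 => Sat φ .AE (extSpec ς (hdual 𝔄) p)

/-- Quantifier symbols. -/
inductive Quant : Type
  | qex : Quant
  | qall : Quant
  deriving DecidableEq

/-- Quantifier prefixes: finite lists of triples `(Q, ς, p)`. -/
abbrev QPrefix (AP : Type*) := List (Quant × Spec AP × AP)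

/-- `χφ`: the formula obtained by prefixing `φ` with the quantifiers of `χ`. -/
def applyPrefix : QPrefix AP → Formula AP → Formula AP
  | [], φ => φ
  | (Quant.qex, ς, p) :: χ, φ => .ex p ς (applyPrefix χ φ)
  | (Quant.qall, ς, p) :: χ, φ => .all p ς (applyPrefix χ φ)

/-- `Q` is `α`-coherent iff `(Q,α) ∈ {(∃,EA),(∀,AE)}`. -/
def coherent : Quant → Flag → Bool
  | .qex, .EA => true
  | .qall, .AE => true
  | _, _ => false

/-- The evolution `evl^α(𝔄,χ)` of a hyperassignment along a quantifier prefix. -/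
def evl (α : Flag) : Set (Set (Asg AP)) → QPrefix AP → Set (Set (Asg AP))
  | 𝔄, [] => 𝔄
  | 𝔄, (Q, ς, p) :: χ =>
      evl α (if coherent Q α then extSpec ς 𝔄 p else hdual (extSpec ς (hdual 𝔄) p)) χ

theorem hdual_antitone {X : Type*} {𝔄₁ 𝔄₂ : Set (Set X)}
    (h : hle 𝔄₁ 𝔄₂) : hle (hdual 𝔄₂) (hdual 𝔄₁) := by
  classical
  rintro Y ⟨ϑ, hϑ, rfl⟩
  choose! g hg hgsub using h
  refine ⟨(fun W => ϑ (g W)) '' 𝔄₁, ⟨fun W => ϑ (g W), ?_, rfl⟩, ?_⟩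
  · intro W hW
    exact hgsub W hW (hϑ _ (hg W hW))
  · rintro x ⟨W, hW, rfl⟩
    exact ⟨g W, hg W hW, rfl⟩

theorem extSpec_mono {ς : Spec AP} {𝔄₁ 𝔄₂ : Set (Set (Asg AP))} {p : AP}
    (h : hle 𝔄₁ 𝔄₂) : hle (extSpec ς 𝔄₁ p) (extSpec ς 𝔄₂ p) := by
  rintro Y ⟨W, hW, F, hF, rfl⟩
  obtain ⟨W₂, hW₂, hsub⟩ := h W hW
  exact ⟨extSet W₂ F p, ⟨W₂, hW₂, F, hF, rfl⟩, Set.image_mono hsub⟩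

/-- Proposition 4: monotonicity of the evolution operator w.r.t. `⊑`. -/
theorem evl_monotone (𝔄₁ 𝔄₂ : Set (Set (Asg AP)))
    (h₁ : IsHyp 𝔄₁) (h₂ : IsHyp 𝔄₂) (hle₁₂ : hle 𝔄₁ 𝔄₂)
    (χ : QPrefix AP) (α : Flag) :
    hle (evl α 𝔄₁ χ) (evl α 𝔄₂ χ) := by
  clear h₁ h₂
  induction χ generalizing 𝔄₁ 𝔄₂ with
  | nil => exact hle₁₂
  | cons hd tl ih =>
    obtain ⟨Q, ς, p⟩ := hd
    simp only [evl]
    apply ih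
    by_cases hc : coherent Q α
    · simp only [hc, if_true]
      exact extSpec_mono hle₁₂
    · simp only [hc, if_false]
      exact hdual_antitone (extSpec_mono (hdual_antitone hle₁₂))

end GFG
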